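/- Let G be a finite simple d-regular graph with n ≥ 2 vertices. Then wd(G) ≥ d − √(2n), where wd(G) denotes the weak degeneracy of G (the inequality is between real numbers, with wd(G) cast into the reals). -/
import Mathlib


open scoped Classical

namespace WeakDeg

variable {V : Type*}

/-- `WeakDegenOn G S f` means: starting from the induced subgraph `G[S]` of `G` with value
function `f`, it is possible to remove all vertices by a sequence of legal applications of the
operations `Delete` and `DelSave`. `Delete(u)` removes `u` and decreases by one the value of
every remaining neighbor of `u`; it is legal if the resulting function is nonnegative on the
remaining vertices. `DelSave(u, w)` (for `w` a neighbor of `u` with `f w < f u`) removes `u` and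
decreases by one the value of every remaining neighbor of `u` except `w`; it is legal if
`f w < f u` and the resulting function is nonnegative on the remaining vertices. -/
inductive WeakDegenOn (G : SimpleGraph V) : Finset V → (V → ℤ) → Prop
  | empty (f : V → ℤ) : WeakDegenOn G ∅ f
  | delete (S : Finset V) (f : V → ℤ) (u : V) (hu : u ∈ S)
      (hleg : ∀ v ∈ S.erase u, 0 ≤ if G.Adj u v then f v - 1 else f v)
      (h : WeakDegenOn G (S.erase u) fun v => if G.Adj u v then f v - 1 else f v) :
      WeakDegenOn G S f
  | delSave (S : Finset V) (f : V → ℤ) (u w : V) (hu : u ∈ S) (hw : w ∈ S)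
      (hadj : G.Adj u w) (hlt : f w < f u)
      (hleg : ∀ v ∈ S.erase u, 0 ≤ if G.Adj u v ∧ v ≠ w then f v - 1 else f v)
      (h : WeakDegenOn G (S.erase u) fun v => if G.Adj u v ∧ v ≠ w then f v - 1 else f v) :
      WeakDegenOn G S f

/-- `G` is weakly `f`-degenerate, for `f : V → ℕ`. -/
def WeaklyDegenerateWith (G : SimpleGraph V) [Fintype V] (f : V → ℕ) : Prop :=
  WeakDegenOn G Finset.univ fun v => (f v : ℤ)

/-- `G` is weakly `d`-degenerate. -/
def WeaklyDegenerate (G : SimpleGraph V) [Fintype V] (d : ℕ) : Prop :=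
  WeaklyDegenerateWith G fun _ => d

/-- The weak degeneracy `wd(G)` of `G`: the least `d` such that `G` is weakly `d`-degenerate. -/
noncomputable def weakDegeneracy (G : SimpleGraph V) [Fintype V] : ℕ :=
  sInf {d : ℕ | WeaklyDegenerate G d}

lemma weakDegenOn_of_big (G : SimpleGraph V) :
    ∀ S : Finset V, ∀ f : V → ℤ, (∀ v ∈ S, (S.card : ℤ) ≤ f v + 1) → WeakDegenOn G S f := by
  intro S
  induction S using Finset.strongInduction with
  | _ S ih =>
    intro f hf
    rcases S.eq_empty_or_nonempty with rfl | ⟨u, hu⟩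
    · exact .empty f
    · refine .delete S f u hu ?_ ?_
      · intro v hv
        have hv' := hf v (Finset.mem_of_mem_erase hv)
        have hcard : 2 ≤ S.card := Finset.one_lt_card.mpr
          ⟨u, hu, v, Finset.mem_of_mem_erase hv, (Finset.ne_of_mem_erase hv).symm⟩
        split <;> omega
      · apply ih _ (Finset.erase_ssubset hu)
        intro v hv
        have hv' := hf v (Finset.mem_of_mem_erase hv)
        have he : (S.erase u).card = S.card - 1 := Finset.card_erase_of_mem hu
        have hc1 : 1 ≤ S.card := Finset.card_pos.mpr ⟨u, hu⟩
        split <;> omega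

lemma weaklyDegenerate_card (G : SimpleGraph V) [Fintype V] :
    WeaklyDegenerate G (Fintype.card V) := by
  apply weakDegenOn_of_big
  intro v _
  simp [Finset.card_univ]

lemma exists_rank (G : SimpleGraph V) (S : Finset V) (f : V → ℤ)
    (h : WeakDegenOn G S f) :
    (∀ v ∈ S, 0 ≤ f v) →
    ∃ ℓ : V → ℕ, Set.InjOn ℓ ↑S ∧ (∀ u ∈ S, ℓ u < S.card) ∧
      ∑ u ∈ S, max 0 (((S.filter (G.Adj u)).card : ℤ) - ℓ u - f u) ≤ (S.card : ℤ) := by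
  induction h with
  | empty f =>
    intro _
    exact ⟨fun _ => 0, by simp [Set.InjOn], by simp, by simp⟩
  | delete S f u hu hleg h ih =>
    intro hf
    obtain ⟨ℓ', hinj, hlt', hsum⟩ := ih hleg
    have hc1 : 1 ≤ S.card := Finset.card_pos.mpr ⟨u, hu⟩
    have hec : (S.erase u).card = S.card - 1 := Finset.card_erase_of_mem hu
    refine ⟨fun v => if v = u then S.card - 1 else ℓ' v, ?_, ?_, ?_⟩
    · intro x hx y hy hxy
      simp only at hxy
      by_cases hxu : x = u <;> by_cases hyu : y = u
      · rw [hxu, hyu]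
      · exfalso
        have := hlt' y (Finset.mem_erase.mpr ⟨hyu, hy⟩)
        rw [if_pos hxu, if_neg hyu] at hxy
        omega
      · exfalso
        have := hlt' x (Finset.mem_erase.mpr ⟨hxu, hx⟩)
        rw [if_neg hxu, if_pos hyu] at hxy
        omega
      · rw [if_neg hxu, if_neg hyu] at hxy
        exact hinj (Finset.mem_erase.mpr ⟨hxu, hx⟩) (Finset.mem_erase.mpr ⟨hyu, hy⟩) hxy
    · intro v hv
      by_cases hvu : v = u
      · simp only [if_pos hvu]; omega
      · simp only [if_neg hvu]
        have := hlt' v (Finset.mem_erase.mpr ⟨hvu, hv⟩)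
        omega
    · rw [← Finset.add_sum_erase S _ hu]
      have hterm : max 0 (((S.filter (G.Adj u)).card : ℤ) -
          (if u = u then S.card - 1 else ℓ' u) - f u) = 0 := by
        have hsub : S.filter (G.Adj u) ⊆ S.erase u := by
          intro v hv
          rw [Finset.mem_filter] at hv
          exact Finset.mem_erase.mpr ⟨fun hvu => G.irrefl (hvu ▸ hv.2), hv.1⟩
        have hdeg : (S.filter (G.Adj u)).card ≤ S.card - 1 := hec ▸ Finset.card_le_card hsub
        have hfu : 0 ≤ f u := hf u hu
        rw [if_pos rfl]
        apply max_eq_left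
        omega
      rw [hterm, zero_add]
      have heq : ∑ v ∈ S.erase u, max 0 (((S.filter (G.Adj v)).card : ℤ) -
          (if v = u then S.card - 1 else ℓ' v) - f v)
          = ∑ v ∈ S.erase u, max 0 ((((S.erase u).filter (G.Adj v)).card : ℤ) - ℓ' v -
            (if G.Adj u v then f v - 1 else f v)) := by
        apply Finset.sum_congr rfl
        intro v hv
        have hvu : v ≠ u := Finset.ne_of_mem_erase hv
        rw [if_neg hvu]
        rw [Finset.filter_erase]
        by_cases hadj : G.Adj u v
        · have humem : u ∈ S.filter (G.Adj v) := Finset.mem_filter.mpr ⟨hu, hadj.symm⟩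
          have : ((S.filter (G.Adj v)).erase u).card = (S.filter (G.Adj v)).card - 1 :=
            Finset.card_erase_of_mem humem
          have hcp : 1 ≤ (S.filter (G.Adj v)).card := Finset.card_pos.mpr ⟨u, humem⟩
          rw [if_pos hadj]
          congr 1
          omega
        · have hunmem : u ∉ S.filter (G.Adj v) := by
            rw [Finset.mem_filter]
            exact fun hc => hadj hc.2.symm
          rw [Finset.erase_eq_of_notMem hunmem, if_neg hadj]
      rw [heq]
      have hs := hsum
      beta_reduce at hs
      calc _ ≤ ((S.erase u).card : ℤ) := hs
        _ ≤ (S.card : ℤ) := by omega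
  | delSave S f u w hu hw hadj hlt hleg h ih =>
    intro hf
    obtain ⟨ℓ', hinj, hlt', hsum⟩ := ih hleg
    have hc1 : 1 ≤ S.card := Finset.card_pos.mpr ⟨u, hu⟩
    have hec : (S.erase u).card = S.card - 1 := Finset.card_erase_of_mem hu
    have hwu : w ≠ u := fun hc => G.irrefl (hc ▸ hadj)
    have hwe : w ∈ S.erase u := Finset.mem_erase.mpr ⟨hwu, hw⟩
    refine ⟨fun v => if v = u then S.card - 1 else ℓ' v, ?_, ?_, ?_⟩
    · intro x hx y hy hxy
      simp only at hxy
      by_cases hxu : x = u <;> by_cases hyu : y = u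
      · rw [hxu, hyu]
      · exfalso
        have := hlt' y (Finset.mem_erase.mpr ⟨hyu, hy⟩)
        rw [if_pos hxu, if_neg hyu] at hxy
        omega
      · exfalso
        have := hlt' x (Finset.mem_erase.mpr ⟨hxu, hx⟩)
        rw [if_neg hxu, if_pos hyu] at hxy
        omega
      · rw [if_neg hxu, if_neg hyu] at hxy
        exact hinj (Finset.mem_erase.mpr ⟨hxu, hx⟩) (Finset.mem_erase.mpr ⟨hyu, hy⟩) hxy
    · intro v hv
      by_cases hvu : v = u
      · simp only [if_pos hvu]; omega
      · simp only [if_neg hvu]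
        have := hlt' v (Finset.mem_erase.mpr ⟨hvu, hv⟩)
        omega
    · rw [← Finset.add_sum_erase S _ hu]
      have hterm : max 0 (((S.filter (G.Adj u)).card : ℤ) -
          (if u = u then S.card - 1 else ℓ' u) - f u) = 0 := by
        have hsub : S.filter (G.Adj u) ⊆ S.erase u := by
          intro v hv
          rw [Finset.mem_filter] at hv
          exact Finset.mem_erase.mpr ⟨fun hvu => G.irrefl (hvu ▸ hv.2), hv.1⟩
        have hdeg : (S.filter (G.Adj u)).card ≤ S.card - 1 := hec ▸ Finset.card_le_card hsub
        have hfu : 0 ≤ f u := hf u hu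
        rw [if_pos rfl]
        apply max_eq_left
        omega
      rw [hterm, zero_add]
      have hle : ∀ v ∈ S.erase u, max 0 (((S.filter (G.Adj v)).card : ℤ) -
          (if v = u then S.card - 1 else ℓ' v) - f v)
          ≤ max 0 ((((S.erase u).filter (G.Adj v)).card : ℤ) - ℓ' v -
            (if G.Adj u v ∧ v ≠ w then f v - 1 else f v)) + (if v = w then (1:ℤ) else 0) := by
        intro v hv
        have hvu : v ≠ u := Finset.ne_of_mem_erase hv
        rw [if_neg hvu, Finset.filter_erase]
        by_cases hadjv : G.Adj u v
        · have humem : u ∈ S.filter (G.Adj v) := Finset.mem_filter.mpr ⟨hu, hadjv.symm⟩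
          have hce : ((S.filter (G.Adj v)).erase u).card = (S.filter (G.Adj v)).card - 1 :=
            Finset.card_erase_of_mem humem
          have hcp : 1 ≤ (S.filter (G.Adj v)).card := Finset.card_pos.mpr ⟨u, humem⟩
          by_cases hvw : v = w
          · rw [if_neg (by simp [hvw]), if_pos hvw]
            omega
          · rw [if_pos ⟨hadjv, hvw⟩, if_neg hvw]
            omega
        · have hunmem : u ∉ S.filter (G.Adj v) := by
            rw [Finset.mem_filter]
            exact fun hc => hadjv hc.2.symm
          rw [Finset.erase_eq_of_notMem hunmem, if_neg (by tauto)]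
          split <;> omega
      calc ∑ v ∈ S.erase u, max 0 (((S.filter (G.Adj v)).card : ℤ) -
            (if v = u then S.card - 1 else ℓ' v) - f v)
          ≤ ∑ v ∈ S.erase u, (max 0 ((((S.erase u).filter (G.Adj v)).card : ℤ) - ℓ' v -
              (if G.Adj u v ∧ v ≠ w then f v - 1 else f v)) + (if v = w then (1:ℤ) else 0)) :=
            Finset.sum_le_sum hle
        _ = (∑ v ∈ S.erase u, max 0 ((((S.erase u).filter (G.Adj v)).card : ℤ) - ℓ' v -
              (if G.Adj u v ∧ v ≠ w then f v - 1 else f v))) + 1 := by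
            rw [Finset.sum_add_distrib, Finset.sum_ite_eq' (S.erase u) w (fun _ => (1:ℤ)),
              if_pos hwe]
        _ ≤ ((S.erase u).card : ℤ) + 1 := by
            have hs := hsum
            beta_reduce at hs
            linarith [hs]
        _ ≤ (S.card : ℤ) := by omega

theorem weakDegeneracy_lower_bound_regular {V : Type*} [Fintype V] (G : SimpleGraph V)
    [DecidableRel G.Adj] (d : ℕ) (hn : 2 ≤ Fintype.card V) (hreg : G.IsRegularOfDegree d) :
    (d : ℝ) - Real.sqrt (2 * Fintype.card V) ≤ (weakDegeneracy G : ℝ) := by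
  have hk0 : WeaklyDegenerate G (weakDegeneracy G) := by
    have hne : {d : ℕ | WeaklyDegenerate G d}.Nonempty :=
      ⟨Fintype.card V, weaklyDegenerate_card G⟩
    exact Nat.sInf_mem hne
  set n := Fintype.card V with hndef
  set k := weakDegeneracy G with hkdef
  have hk : WeaklyDegenerate G k := hk0
  obtain ⟨ℓ, hinj, hltn, hsum⟩ := exists_rank G Finset.univ (fun _ => (k:ℤ)) hk
    (fun v _ => Int.ofNat_nonneg k)
  have hfil : ∀ u : V,
      (@Finset.filter V (G.Adj u) (fun a => Classical.propDecidable (G.Adj u a)) Finset.univ)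
        = Finset.univ.filter (G.Adj u) := by
    intro u
    apply Finset.filter_congr_decidable
  simp only [hfil] at hsum
  have hdeg : ∀ u : V, (Finset.univ.filter (G.Adj u)).card = d := by
    intro u
    rw [← SimpleGraph.neighborFinset_eq_filter]
    exact hreg u
  have hcu : (Finset.univ : Finset V).card = n := Finset.card_univ
  have himg : Finset.univ.image ℓ = Finset.range n := by
    apply Finset.eq_of_subset_of_card_le
    · intro j hj
      obtain ⟨u, _, rfl⟩ := Finset.mem_image.mp hj
      exact Finset.mem_range.mpr (hcu ▸ hltn u (Finset.mem_univ u))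
    · rw [Finset.card_range, Finset.card_image_of_injOn hinj, hcu]
  have hsum2 : ∑ j ∈ Finset.range n, max 0 ((d:ℤ) - j - k) ≤ (n:ℤ) := by
    rw [← himg, Finset.sum_image (fun x hx y hy => hinj (by simp) (by simp))]
    calc ∑ u : V, max 0 ((d:ℤ) - ℓ u - k)
        = ∑ u : V, max 0 (((Finset.univ.filter (G.Adj u)).card : ℤ) - ℓ u - (k:ℤ)) := by
          apply Finset.sum_congr rfl; intro u _; rw [hdeg]
      _ ≤ (n:ℤ) := by rw [← hcu]; exact hsum
  have key : ∀ t : ℕ, t ≤ n → ∑ j ∈ Finset.range t, ((d:ℤ) - j - k) ≤ (n:ℤ) := by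
    intro t ht
    calc ∑ j ∈ Finset.range t, ((d:ℤ) - j - k)
        ≤ ∑ j ∈ Finset.range t, max 0 ((d:ℤ) - j - k) :=
          Finset.sum_le_sum fun j _ => le_max_right _ _
      _ ≤ ∑ j ∈ Finset.range n, max 0 ((d:ℤ) - j - k) :=
          Finset.sum_le_sum_of_subset_of_nonneg (Finset.range_subset_range.mpr ht)
            (fun j _ _ => le_max_left _ _)
      _ ≤ (n:ℤ) := hsum2
  set c : ℤ := (d:ℤ) - k with hcdef
  have hsq : 0 ≤ Real.sqrt (2 * n) := Real.sqrt_nonneg _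
  by_cases hc : c ≤ 0
  · have : (d:ℝ) - k ≤ 0 := by
      have : (d:ℤ) ≤ k := by omega
      have : (d:ℝ) ≤ k := by exact_mod_cast this
      linarith
    linarith
  push_neg at hc
  have hcn : c ≤ n := by
    by_contra hcn
    push_neg at hcn
    have h1 : ∀ j ∈ Finset.range n, (2:ℤ) ≤ (d:ℤ) - j - k := by
      intro j hj
      have := Finset.mem_range.mp hj
      omega
    have h2 := Finset.card_nsmul_le_sum (Finset.range n) (fun j => (d:ℤ) - j - k) 2 h1
    rw [Finset.card_range, nsmul_eq_mul] at h2
    have h3 := key n le_rfl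
    omega
  set t : ℕ := c.toNat with htdef
  have htc : (t:ℤ) = c := Int.toNat_of_nonneg (by omega)
  have ht1 : 1 ≤ t := by omega
  have htn : t ≤ n := by omega
  have hkey := key t htn
  have hcong : ∀ j ∈ Finset.range t, (d:ℤ) - j - k = c - j := fun j _ => by omega
  rw [Finset.sum_congr rfl hcong, Finset.sum_sub_distrib, Finset.sum_const,
    Finset.card_range, nsmul_eq_mul] at hkey
  have hg : (∑ j ∈ Finset.range t, (j:ℤ)) * 2 = t * (t - 1) := by
    have := Finset.sum_range_id_mul_two t
    have h2 : ((∑ i ∈ Finset.range t, i : ℕ) : ℤ) * 2 = ((t * (t - 1) : ℕ) : ℤ) := by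
      exact_mod_cast congrArg (Nat.cast : ℕ → ℤ) this
    push_cast [Nat.cast_sub ht1] at h2 ⊢
    convert h2 using 2
  rw [htc] at hkey hg
  have hc2 : c * c ≤ 2 * (n:ℤ) := by linarith
  have hcr : (c:ℝ) ≤ Real.sqrt (2 * n) := by
    rw [Real.le_sqrt (by exact_mod_cast hc.le) (by positivity)]
    have h3 : ((c * c : ℤ) : ℝ) ≤ ((2 * (n:ℤ) : ℤ) : ℝ) := by exact_mod_cast hc2
    push_cast at h3 ⊢
    nlinarith [h3]
  have hcr2 : (c:ℝ) = (d:ℝ) - k := by push_cast [hcdef]; ring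
  linarith


end WeakDeg
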